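/- In the extended Black–Scholes model with an earnings announcement, the call price C(t,S) = C_BS(T−t, S; I(t), K, r) with I(t) = √(σ² + σ_e²/(T−t)) satisfies, for 0 ≤ t < T and all S > 0, the two-sided Theta bound: Θ_BS(T−t, S; I(t), K, r) ≤ ∂C/∂t (t, S) ≤ 0, where Θ_BS(τ, S; σ, K, r) = −S·σ·φ(d₁)/(2√τ) − r·K·e^{−rτ}·Φ(d₂). -/

import Mathlib

open MeasureTheory ProbabilityTheory

/-- The standard normal cumulative distribution function `Φ`. -/
noncomputable def stdNormalCDF (x : ℝ) : ℝ := ((gaussianReal 0 1) (Set.Iic x)).toReal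

/-- The standard normal density `φ`. -/
noncomputable def stdNormalPDF (x : ℝ) : ℝ := Real.exp (-x ^ 2 / 2) / Real.sqrt (2 * Real.pi)

/-- The Black–Scholes quantity `d₁`. -/
noncomputable def d1 (τ S σ K r : ℝ) : ℝ :=
  (Real.log (S / K) + (r + σ ^ 2 / 2) * τ) / (σ * Real.sqrt τ)

/-- The Black–Scholes quantity `d₂ = d₁ − σ√τ`. -/
noncomputable def d2 (τ S σ K r : ℝ) : ℝ := d1 τ S σ K r - σ * Real.sqrt τ

/-- The Black–Scholes call price `C_BS(τ, S; σ, K, r) = S·Φ(d₁) − K·e^{−rτ}·Φ(d₂)`. -/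
noncomputable def BSCall (τ S σ K r : ℝ) : ℝ :=
  S * stdNormalCDF (d1 τ S σ K r) - K * Real.exp (-r * τ) * stdNormalCDF (d2 τ S σ K r)

/-- The Black–Scholes Vega `V_BS(τ, S; σ, K, r) = S·φ(d₁)·√τ`. -/
noncomputable def BSVega (τ S σ K r : ℝ) : ℝ :=
  S * stdNormalPDF (d1 τ S σ K r) * Real.sqrt τ

/-- The Black–Scholes Theta
`Θ_BS(τ, S; σ, K, r) = −S·σ·φ(d₁)/(2√τ) − r·K·e^{−rτ}·Φ(d₂)`. -/
noncomputable def BSTheta (τ S σ K r : ℝ) : ℝ :=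
  -S * σ * stdNormalPDF (d1 τ S σ K r) / (2 * Real.sqrt τ)
    - r * K * Real.exp (-r * τ) * stdNormalCDF (d2 τ S σ K r)


lemma pdf_eq' : stdNormalPDF = gaussianPDFReal 0 1 := by
  funext t
  rw [stdNormalPDF, gaussianPDFReal]
  push_cast
  rw [mul_one, sub_zero, inv_mul_eq_div, eq_div_iff (by positivity), div_mul_eq_mul_div,
    mul_comm]
  norm_num
  exact mul_div_cancel_left₀ _ (by positivity)

lemma pdf_cont' : Continuous stdNormalPDF := by
  unfold stdNormalPDF; fun_prop

lemma pdf_pos' (x : ℝ) : 0 < stdNormalPDF x := by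
  unfold stdNormalPDF; positivity

lemma cdf_eq' (x : ℝ) : stdNormalCDF x = ∫ t in Set.Iic x, stdNormalPDF t := by
  rw [stdNormalCDF, gaussianReal_apply_eq_integral 0 one_ne_zero, pdf_eq',
    ENNReal.toReal_ofReal]
  exact setIntegral_nonneg measurableSet_Iic fun t _ => gaussianPDFReal_nonneg 0 1 t

lemma cdf_nonneg' (x : ℝ) : 0 ≤ stdNormalCDF x := ENNReal.toReal_nonneg

lemma hasDerivAt_cdf' (x : ℝ) : HasDerivAt stdNormalCDF (stdNormalPDF x) x := by
  have hint : Integrable stdNormalPDF := by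
    rw [pdf_eq']; exact integrable_gaussianPDFReal 0 1
  have key : ∀ y, stdNormalCDF y = stdNormalCDF 0 + ∫ t in (0:ℝ)..y, stdNormalPDF t := by
    intro y
    rw [← intervalIntegral.integral_Iic_sub_Iic hint.integrableOn hint.integrableOn,
      ← cdf_eq', ← cdf_eq']
    ring
  have h2 : HasDerivAt (fun y => stdNormalCDF 0 + ∫ t in (0:ℝ)..y, stdNormalPDF t)
      (stdNormalPDF x) x :=
    ((pdf_cont'.integral_hasStrictDerivAt 0 x).hasDerivAt).const_add _
  exact h2.congr_of_eventuallyEq (Filter.Eventually.of_forall key)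

lemma d1_eq_aux (S K r σ σe τ : ℝ) (hσ : 0 < σ) (hσe : 0 < σe) (hτ : 0 < τ) :
    d1 τ S (Real.sqrt (σ^2 + σe^2/τ)) K r
      = (Real.log (S/K) + r*τ) / Real.sqrt (σ^2*τ+σe^2) + Real.sqrt (σ^2*τ+σe^2)/2 := by
  have hw : 0 < σ^2*τ+σe^2 := by positivity
  have hI : 0 < σ^2 + σe^2/τ := by positivity
  have hmul : Real.sqrt (σ^2+σe^2/τ) * Real.sqrt τ = Real.sqrt (σ^2*τ+σe^2) := by
    rw [← Real.sqrt_mul hI.le]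
    congr 1
    field_simp
  set u := Real.sqrt (σ^2*τ+σe^2) with hudef
  have hu : 0 < u := Real.sqrt_pos.2 hw
  have hu2 : u^2 = σ^2*τ+σe^2 := Real.sq_sqrt hw.le
  have hI2 : Real.sqrt (σ^2+σe^2/τ)^2 = σ^2+σe^2/τ := Real.sq_sqrt hI.le
  rw [d1, hmul, hI2]
  have hnum : (Real.log (S/K) + (r + (σ^2+σe^2/τ)/2)*τ) = (Real.log (S/K) + r*τ) + u^2/2 := by
    rw [hu2]; field_simp; ring
  rw [hnum]
  field_simp

lemma sqrt_mul_aux (σ σe τ : ℝ) (hσ : 0 < σ) (hσe : 0 < σe) (hτ : 0 < τ) :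
    Real.sqrt (σ^2+σe^2/τ) * Real.sqrt τ = Real.sqrt (σ^2*τ+σe^2) := by
  have hI : 0 < σ^2 + σe^2/τ := by positivity
  rw [← Real.sqrt_mul hI.le]
  congr 1
  field_simp

/-- Two-sided Theta bound: in the extended Black–Scholes model with an EA
jump, for `0 ≤ t < T` and all `S > 0`, the time derivative of the pre-announcement call price
`C(t,S) = C_BS(T−t, S; I(t), K, r)`, with `I(t) = √(σ² + σ_e²/(T−t))`, satisfies
`Θ_BS(T−t, S; I(t), K, r) ≤ ∂C/∂t (t, S) ≤ 0`. -/
theorem extendedBS_theta_bounds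
    (r σ σe t T K : ℝ) (hr : 0 ≤ r) (hσ : 0 < σ) (hσe : 0 < σe)
    (hK : 0 < K) (ht : 0 ≤ t) (htT : t < T) :
    ∀ S : ℝ, 0 < S →
      BSTheta (T - t) S (Real.sqrt (σ ^ 2 + σe ^ 2 / (T - t))) K r
          ≤ deriv (fun s : ℝ => BSCall (T - s) S (Real.sqrt (σ ^ 2 + σe ^ 2 / (T - s))) K r) t
        ∧ deriv (fun s : ℝ => BSCall (T - s) S (Real.sqrt (σ ^ 2 + σe ^ 2 / (T - s))) K r) t
          ≤ 0 := by
  intro S hS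
  have hτ : 0 < T - t := sub_pos.2 htT
  set L := Real.log (S / K) with hL
  set w : ℝ → ℝ := fun s => σ^2*(T-s)+σe^2 with hwdef
  set u : ℝ → ℝ := fun s => Real.sqrt (w s) with hudef
  set A : ℝ → ℝ := fun s => L + r*(T-s) with hAdef
  have hwt : 0 < w t := by simp only [hwdef]; positivity
  have hut : 0 < u t := Real.sqrt_pos.2 hwt
  have hu2 : u t ^ 2 = w t := Real.sq_sqrt hwt.le
  set F : ℝ → ℝ := fun s =>
    S * stdNormalCDF (A s / u s + u s / 2)
      - K * Real.exp (-r*(T-s)) * stdNormalCDF (A s / u s - u s / 2) with hFdef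
  -- eventual equality
  have hev : (fun s : ℝ => BSCall (T - s) S (Real.sqrt (σ ^ 2 + σe ^ 2 / (T - s))) K r)
      =ᶠ[nhds t] F := by
    have hopen : ∀ᶠ s in nhds t, s < T := Filter.Tendsto.eventually_lt_const htT Filter.tendsto_id
    filter_upwards [hopen] with s hs
    have hτs : 0 < T - s := sub_pos.2 hs
    have hd1 : d1 (T-s) S (Real.sqrt (σ^2+σe^2/(T-s))) K r = A s / u s + u s / 2 := by
      rw [d1_eq_aux S K r σ σe (T-s) hσ hσe hτs]
    have hd2 : d2 (T-s) S (Real.sqrt (σ^2+σe^2/(T-s))) K r = A s / u s - u s / 2 := by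
      rw [d2, hd1, sqrt_mul_aux σ σe (T-s) hσ hσe hτs]
      simp only [hwdef, hudef]
      ring
    rw [BSCall, hd1, hd2]
  -- derivatives
  have hTs : HasDerivAt (fun s : ℝ => T - s) (-1) t := by
    simpa using (hasDerivAt_id t).const_sub T
  have hw' : HasDerivAt w (-σ^2) t := by
    simpa [hwdef] using (hTs.const_mul (σ^2)).add_const (σe^2)
  have hu' : HasDerivAt u (-σ^2 / (2 * u t)) t := by
    simpa [hudef] using hw'.sqrt (ne_of_gt hwt)
  have hA' : HasDerivAt A (-r) t := by
    simpa [hAdef] using ((hTs.const_mul r).const_add L)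
  set q : ℝ := ((-r) * u t - A t * (-σ^2 / (2 * u t))) / (u t)^2 with hqdef
  have hq : HasDerivAt (fun s => A s / u s) q t := hA'.div hu' (ne_of_gt hut)
  have hD1 : HasDerivAt (fun s => A s / u s + u s / 2)
      (q + (-σ^2 / (2 * u t)) / 2) t := hq.add (hu'.div_const 2)
  have hD2 : HasDerivAt (fun s => A s / u s - u s / 2)
      (q - (-σ^2 / (2 * u t)) / 2) t := hq.sub (hu'.div_const 2)
  set dd1 : ℝ := A t / u t + u t / 2 with hdd1
  set dd2 : ℝ := A t / u t - u t / 2 with hdd2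
  have hΦ1 : HasDerivAt (fun s => stdNormalCDF (A s / u s + u s / 2))
      (stdNormalPDF dd1 * (q + (-σ^2 / (2 * u t)) / 2)) t :=
    by have h := (hasDerivAt_cdf' dd1).comp t hD1; exact h
  have hΦ2 : HasDerivAt (fun s => stdNormalCDF (A s / u s - u s / 2))
      (stdNormalPDF dd2 * (q - (-σ^2 / (2 * u t)) / 2)) t :=
    by have h := (hasDerivAt_cdf' dd2).comp t hD2; exact h
  have hE : HasDerivAt (fun s : ℝ => Real.exp (-r*(T-s))) (Real.exp (-r*(T-t)) * r) t := by
    have h1 : HasDerivAt (fun s : ℝ => -r*(T-s)) r t := by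
      simpa using hTs.const_mul (-r)
    exact h1.exp
  have hF : HasDerivAt F
      (S * (stdNormalPDF dd1 * (q + (-σ^2 / (2 * u t)) / 2))
        - ((K * (Real.exp (-r*(T-t)) * r)) * stdNormalCDF dd2
          + (K * Real.exp (-r*(T-t))) * (stdNormalPDF dd2 * (q - (-σ^2 / (2 * u t)) / 2)))) t := by
    exact (hΦ1.const_mul S).sub ((hE.const_mul K).mul hΦ2)
  -- the key identity  K e^{-rτ} φ(d2) = S φ(d1)
  have hid : K * Real.exp (-r*(T-t)) * stdNormalPDF dd2 = S * stdNormalPDF dd1 := by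
    rw [stdNormalPDF, stdNormalPDF]
    have hsq : -dd2^2/2 = -dd1^2/2 + A t := by
      rw [hdd1, hdd2]
      field_simp
      ring
    rw [hsq, Real.exp_add]
    have hexpA : Real.exp (A t) = S / K * Real.exp (r*(T-t)) := by
      rw [hAdef]
      simp only
      rw [Real.exp_add, hL, Real.exp_log (by positivity)]
    rw [hexpA, neg_mul, Real.exp_neg]
    field_simp
  set D : ℝ := -(S * σ^2 * stdNormalPDF dd1 / (2 * u t))
      - r * K * Real.exp (-r*(T-t)) * stdNormalCDF dd2 with hDdef
  have hFD : HasDerivAt F D t := by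
    convert hF using 1
    rw [hDdef]
    linear_combination (q - (-σ^2 / (2 * u t)) / 2) * hid
  have hderiv : deriv (fun s : ℝ => BSCall (T - s) S (Real.sqrt (σ ^ 2 + σe ^ 2 / (T - s))) K r) t
      = D := by
    have := hFD.congr_of_eventuallyEq hev
    exact this.deriv
  rw [hderiv]
  constructor
  · -- lower bound
    have hd1t : d1 (T-t) S (Real.sqrt (σ^2+σe^2/(T-t))) K r = dd1 := by
      rw [d1_eq_aux S K r σ σe (T-t) hσ hσe hτ]
    have hIu : Real.sqrt (σ^2+σe^2/(T-t)) * Real.sqrt (T-t) = u t :=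
      sqrt_mul_aux σ σe (T-t) hσ hσe hτ
    have hd2t : d2 (T-t) S (Real.sqrt (σ^2+σe^2/(T-t))) K r = dd2 := by
      rw [d2, hd1t, hIu, hdd2, hdd1]; ring
    rw [BSTheta, hd1t, hd2t, hDdef]
    have hst : 0 < Real.sqrt (T-t) := Real.sqrt_pos.2 hτ
    have hφ : 0 < stdNormalPDF dd1 := pdf_pos' dd1
    have hI2 : Real.sqrt (σ^2+σe^2/(T-t))^2 = σ^2+σe^2/(T-t) :=
      Real.sq_sqrt (by positivity)
    have h3 : Real.sqrt (σ^2+σe^2/(T-t)) * u t = (σ^2+σe^2/(T-t)) * Real.sqrt (T-t) := by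
      rw [← hIu, ← mul_assoc, ← pow_two, hI2]
    have h2 : σ^2 * Real.sqrt (T-t) ≤ Real.sqrt (σ^2+σe^2/(T-t)) * u t := by
      rw [h3]
      have hnn : 0 ≤ σe^2/(T-t) := by positivity
      nlinarith [hst.le]
    have key : S*σ^2*stdNormalPDF dd1/(2*u t)
        ≤ S*Real.sqrt (σ^2+σe^2/(T-t))*stdNormalPDF dd1/(2*Real.sqrt (T-t)) := by
      rw [div_le_div_iff₀ (by positivity) (by positivity)]
      calc S*σ^2*stdNormalPDF dd1*(2*Real.sqrt (T-t))
          = (2*S*stdNormalPDF dd1)*(σ^2*Real.sqrt (T-t)) := by ring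
        _ ≤ (2*S*stdNormalPDF dd1)*(Real.sqrt (σ^2+σe^2/(T-t)) * u t) := by
            exact mul_le_mul_of_nonneg_left h2 (by positivity)
        _ = S*Real.sqrt (σ^2+σe^2/(T-t))*stdNormalPDF dd1*(2*u t) := by ring
    have hre : -S*Real.sqrt (σ^2+σe^2/(T-t))*stdNormalPDF dd1/(2*Real.sqrt (T-t))
        = -(S*Real.sqrt (σ^2+σe^2/(T-t))*stdNormalPDF dd1/(2*Real.sqrt (T-t))) := by ring
    rw [hre]
    linarith [key]
  · -- upper bound
    rw [hDdef]
    have h1 : 0 ≤ S * σ^2 * stdNormalPDF dd1 / (2 * u t) := by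
      have := (pdf_pos' dd1).le
      positivity
    have h2 : 0 ≤ r * K * Real.exp (-r*(T-t)) * stdNormalCDF dd2 := by
      have := cdf_nonneg' dd2
      positivity
    linarith
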